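/- Let ω : ℤ → ℝ and suppose there exists a strictly increasing sequence (n_m)_{m∈ℕ} of natural numbers such that ω_{j−n_m} = ω_j for all 0 ≤ j ≤ n_m − 1 and all m (i.e., ω restricted to [−n_m, −1] equals ω restricted to [0, n_m−1]). For E ∈ ℝ set x_m(E) = tr( M_E(ω_0 ω_1 ⋯ ω_{n_m−1}) ). If Σ_{m∈ℕ} |x_m(E)|² = ∞, then E is not an eigenvalue of the Schrödinger operator with potential ω: there is no nonzero square-summable ψ : ℤ → ℂ satisfying ψ(n+1) + ψ(n−1) + ω(n)ψ(n) = E·ψ(n) for all n ∈ ℤ. -/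

import Mathlib

/-- A single transfer matrix `M_z(a) = [[z − a, −1],[1, 0]]`. -/
noncomputable def tMat (z : ℂ) (a : ℝ) : Matrix (Fin 2) (Fin 2) ℂ := !![z - a, -1; 1, 0]

/-- The transfer matrix over the word `ω_0 ω_1 ⋯ ω_{n−1}`:
`M_z(ω_0⋯ω_{n−1}) = M_z(ω_{n−1})⋯M_z(ω_1)·M_z(ω_0)`. -/
noncomputable def tWord (z : ℂ) (ω : ℤ → ℝ) (n : ℕ) : Matrix (Fin 2) (Fin 2) ℂ :=
  ((List.range n).map fun k => tMat z (ω ((n - 1 - k : ℕ) : ℤ))).prod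

open Matrix

/-- Generalized transfer matrix over the word starting at an arbitrary integer `s`. -/
noncomputable def tW (z : ℂ) (ω : ℤ → ℝ) (s : ℤ) (n : ℕ) : Matrix (Fin 2) (Fin 2) ℂ :=
  ((List.range n).map fun k : ℕ => tMat z (ω (s + (n : ℤ) - 1 - (k : ℤ)))).prod

lemma tW_succ (z : ℂ) (ω : ℤ → ℝ) (s : ℤ) (n : ℕ) :
    tW z ω s (n + 1) = tW z ω (s + 1) n * tMat z (ω s) := by
  unfold tW
  rw [List.range_succ, List.map_append, List.prod_append]
  simp only [List.map_cons, List.map_nil, List.prod_cons, List.prod_nil, mul_one]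
  congr 1
  · congr 1
    apply List.map_congr_left
    intro k _
    have h : s + ((n + 1 : ℕ) : ℤ) - 1 - (k : ℤ) = s + 1 + (n : ℤ) - 1 - (k : ℤ) := by
      push_cast; ring
    rw [h]
  · have h : s + ((n + 1 : ℕ) : ℤ) - 1 - (n : ℤ) = s := by push_cast; ring
    rw [h]

lemma tWord_eq_tW (z : ℂ) (ω : ℤ → ℝ) (n : ℕ) : tWord z ω n = tW z ω 0 n := by
  unfold tWord tW
  congr 1
  apply List.map_congr_left
  intro k hk
  rw [List.mem_range] at hk
  have h : ((n - 1 - k : ℕ) : ℤ) = 0 + (n : ℤ) - 1 - (k : ℤ) := by omega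
  rw [h]

lemma tMat_det (z : ℂ) (a : ℝ) : (tMat z a).det = 1 := by
  simp [tMat, Matrix.det_fin_two_of]

lemma tW_det (z : ℂ) (ω : ℤ → ℝ) (s : ℤ) (n : ℕ) : (tW z ω s n).det = 1 := by
  induction n generalizing s with
  | zero => simp [tW]
  | succ n ih => rw [tW_succ, Matrix.det_mul, ih, tMat_det, mul_one]

/-- Cayley–Hamilton for `2×2` matrices of determinant 1. -/
lemma ch_two (A : Matrix (Fin 2) (Fin 2) ℂ) (hA : A.det = 1) :
    A * A + 1 = A.trace • A := by
  have h2 : A * A.adjugate = 1 := by rw [Matrix.mul_adjugate, hA, one_smul]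
  have h3 : A + A.adjugate = A.trace • 1 := by
    rw [Matrix.adjugate_fin_two, Matrix.trace_fin_two]
    ext i j
    fin_cases i <;> fin_cases j <;>
      simp [Matrix.one_apply] <;> ring
  calc A * A + 1 = A * (A + A.adjugate) := by rw [mul_add, h2]
    _ = A * (A.trace • 1) := by rw [h3]
    _ = A.trace • A := by rw [Matrix.mul_smul, mul_one]

section action

variable (E : ℝ) (ω : ℤ → ℝ) (ψ : ℤ → ℂ)
    (heq : ∀ n : ℤ, ψ (n + 1) = ((E : ℂ) - ω n) * ψ n - ψ (n - 1))

include heq in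
lemma tMat_step (s : ℤ) :
    tMat (E : ℂ) (ω s) *ᵥ ![ψ s, ψ (s - 1)] = ![ψ (s + 1), ψ (s + 1 - 1)] := by
  funext i
  fin_cases i <;>
    simp [tMat, Matrix.mulVec, dotProduct, Fin.sum_univ_two]
  linear_combination -(heq s)

include heq in
lemma tW_action (n : ℕ) : ∀ s : ℤ,
    tW (E : ℂ) ω s n *ᵥ ![ψ s, ψ (s - 1)] = ![ψ (s + n), ψ (s + n - 1)] := by
  induction n with
  | zero => intro s; simp [tW]
  | succ n ih =>
    intro s
    rw [tW_succ, ← Matrix.mulVec_mulVec, tMat_step E ω ψ heq s, ih (s + 1)]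
    have h1 : s + 1 + (n : ℤ) = s + ((n : ℕ) + 1 : ℕ) := by push_cast; ring
    rw [h1]

end action

private lemma sq_bound (x c p q r s : ℝ) (hc : 0 < c) (hx : 0 ≤ x)
    (h : x * c ≤ p + q + r + s) (hp : 0 ≤ p) (hq : 0 ≤ q) (hr : 0 ≤ r) (hs : 0 ≤ s) :
    x ^ 2 ≤ 4 / c ^ 2 * (p ^ 2 + q ^ 2 + r ^ 2 + s ^ 2) := by
  rw [div_mul_eq_mul_div, le_div_iff₀ (by positivity)]
  nlinarith [sq_nonneg (p - q), sq_nonneg (r - s), sq_nonneg (p + q - r - s),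
    mul_nonneg hx hc.le, sq_nonneg (p + q + r + s)]

theorem centered_gordon_no_eigenvalue
    (ω : ℤ → ℝ) (nseq : ℕ → ℕ) (hmono : StrictMono nseq)
    (hrep : ∀ m : ℕ, ∀ j : ℕ, j < nseq m → ω ((j : ℤ) - (nseq m : ℤ)) = ω (j : ℤ))
    (E : ℝ)
    (hdiv : ¬ Summable fun m : ℕ => (‖(tWord (E : ℂ) ω (nseq m)).trace‖) ^ 2) :
    ¬ ∃ ψ : ℤ → ℂ, ψ ≠ 0 ∧ Summable (fun n : ℤ => ‖ψ n‖ ^ 2) ∧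
      ∀ n : ℤ, ψ (n + 1) + ψ (n - 1) + (ω n : ℂ) * ψ n = (E : ℂ) * ψ n := by
  rintro ⟨ψ, hψ0, hsum, hrec⟩
  have heq : ∀ n : ℤ, ψ (n + 1) = ((E : ℂ) - ω n) * ψ n - ψ (n - 1) := by
    intro n; linear_combination hrec n
  -- the initial vector is nonzero
  have hne : ψ 0 ≠ 0 ∨ ψ (-1) ≠ 0 := by
    by_contra h
    push_neg at h
    obtain ⟨h0, h1⟩ := h
    apply hψ0
    funext n
    have key : ∀ n : ℤ, ψ n = 0 ∧ ψ (n - 1) = 0 := by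
      intro n
      induction n using Int.induction_on with
      | zero => exact ⟨h0, h1⟩
      | succ i ih =>
        refine ⟨?_, by simpa using ih.1⟩
        rw [heq i, ih.1, ih.2]; ring
      | pred i ih =>
        refine ⟨ih.2, ?_⟩
        have := heq (-(i : ℤ) - 1)
        have e1 : (-(i : ℤ) - 1) + 1 = -(i : ℤ) := by ring
        rw [e1, ih.1, ih.2] at this
        have : ψ (-(i : ℤ) - 1 - 1) = 0 := by linear_combination this
        simpa using this
    exact (key n).1
  -- positive constant
  set c : ℝ := ‖ψ 0‖ + ‖ψ (-1)‖ with hc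
  have hcpos : 0 < c := by
    rcases hne with h | h
    · have : 0 < ‖ψ 0‖ := norm_pos_iff.mpr h
      positivity
    · have : 0 < ‖ψ (-1)‖ := norm_pos_iff.mpr h
      positivity
  -- the key pointwise identity and bound
  have hbound : ∀ m : ℕ,
      (‖(tWord (E : ℂ) ω (nseq m)).trace‖) ^ 2 ≤
        4 / c ^ 2 * (‖ψ ((nseq m : ℤ))‖ ^ 2 + ‖ψ ((nseq m : ℤ) - 1)‖ ^ 2 +
          ‖ψ (-(nseq m : ℤ))‖ ^ 2 + ‖ψ (-(nseq m : ℤ) - 1)‖ ^ 2) := by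
    intro m
    set N : ℕ := nseq m with hN
    set A := tWord (E : ℂ) ω N with hA
    set x := A.trace with hx
    -- tW at -N equals tWord
    have hWneg : tW (E : ℂ) ω (-(N : ℤ)) N = A := by
      rw [hA, tWord_eq_tW]
      unfold tW
      congr 1
      apply List.map_congr_left
      intro k hk
      rw [List.mem_range] at hk
      have h1 : (-(N : ℤ) + (N : ℤ) - 1 - (k : ℤ)) = ((N - 1 - k : ℕ) : ℤ) - (N : ℤ) := by
        push_cast [Nat.cast_sub (by omega : k ≤ N - 1), Nat.cast_sub (by omega : 1 ≤ N)]
        ring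
      have h2 : (0 + (N : ℤ) - 1 - (k : ℤ)) = ((N - 1 - k : ℕ) : ℤ) := by
        push_cast [Nat.cast_sub (by omega : k ≤ N - 1), Nat.cast_sub (by omega : 1 ≤ N)]
        ring
      rw [h1, h2, hrep m (N - 1 - k) (by omega)]
    -- actions
    have hact1 : A *ᵥ ![ψ (-(N : ℤ)), ψ (-(N : ℤ) - 1)] = ![ψ 0, ψ (-1)] := by
      have := tW_action E ω ψ heq N (-(N : ℤ))
      rw [hWneg] at this
      simpa using this
    have hact2 : A *ᵥ ![ψ 0, ψ (0 - 1)] = ![ψ ((N : ℤ)), ψ ((N : ℤ) - 1)] := by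
      have := tW_action E ω ψ heq N 0
      rw [← tWord_eq_tW, ← hA] at this
      simpa using this
    have hdet : A.det = 1 := by rw [hA, tWord_eq_tW]; exact tW_det _ _ _ _
    have hch := ch_two A hdet
    have hkey : ![ψ ((N : ℤ)), ψ ((N : ℤ) - 1)] + ![ψ (-(N : ℤ)), ψ (-(N : ℤ) - 1)]
        = x • ![ψ 0, ψ (-1)] := by
      have := congrArg (fun M => M *ᵥ ![ψ (-(N : ℤ)), ψ (-(N : ℤ) - 1)]) hch
      simp only [Matrix.add_mulVec, Matrix.one_mulVec, Matrix.smul_mulVec,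
        ← Matrix.mulVec_mulVec, hact1] at this
      rw [show ψ (-1) = ψ (0 - 1) by norm_num] at this
      rw [hact2] at this
      rw [show ψ (0 - 1) = ψ (-1) by norm_num] at this
      exact this
    have h0 : ψ ((N : ℤ)) + ψ (-(N : ℤ)) = x * ψ 0 := by
      have := congrFun hkey 0
      simpa using this
    have h1 : ψ ((N : ℤ) - 1) + ψ (-(N : ℤ) - 1) = x * ψ (-1) := by
      have := congrFun hkey 1
      simpa using this
    -- norms
    have hb0 : ‖x‖ * ‖ψ 0‖ ≤ ‖ψ ((N : ℤ))‖ + ‖ψ (-(N : ℤ))‖ := by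
      calc ‖x‖ * ‖ψ 0‖ = ‖x * ψ 0‖ := by
            simp [norm_mul]
        _ = ‖ψ ((N : ℤ)) + ψ (-(N : ℤ))‖ := by rw [h0]
        _ ≤ _ := norm_add_le _ _
    have hb1 : ‖x‖ * ‖ψ (-1)‖ ≤ ‖ψ ((N : ℤ) - 1)‖ + ‖ψ (-(N : ℤ) - 1)‖ := by
      calc ‖x‖ * ‖ψ (-1)‖ = ‖x * ψ (-1)‖ := by
            simp [norm_mul]
        _ = ‖ψ ((N : ℤ) - 1) + ψ (-(N : ℤ) - 1)‖ := by rw [h1]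
        _ ≤ _ := norm_add_le _ _
    have hsumb : ‖x‖ * c ≤
        ‖ψ ((N : ℤ))‖ + ‖ψ ((N : ℤ) - 1)‖ + ‖ψ (-(N : ℤ))‖ + ‖ψ (-(N : ℤ) - 1)‖ := by
      rw [hc, mul_add]
      linarith [hb0, hb1]
    exact sq_bound _ _ _ _ _ _ hcpos (norm_nonneg x) hsumb
      (norm_nonneg _) (norm_nonneg _) (norm_nonneg _) (norm_nonneg _)
  -- summability of the majorant
  have hinj1 : Function.Injective (fun m : ℕ => ((nseq m : ℤ))) := by
    intro a b h; simp only at h; exact hmono.injective (by omega)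
  have hinj2 : Function.Injective (fun m : ℕ => ((nseq m : ℤ) - 1)) := by
    intro a b h; simp only at h; exact hmono.injective (by omega)
  have hinj3 : Function.Injective (fun m : ℕ => (-(nseq m : ℤ))) := by
    intro a b h; simp only at h; exact hmono.injective (by omega)
  have hinj4 : Function.Injective (fun m : ℕ => (-(nseq m : ℤ) - 1)) := by
    intro a b h; simp only at h; exact hmono.injective (by omega)
  have hs1 : Summable (fun m : ℕ => ‖ψ ((nseq m : ℤ))‖ ^ 2) := hsum.comp_injective hinj1
  have hs2 : Summable (fun m : ℕ => ‖ψ ((nseq m : ℤ) - 1)‖ ^ 2) := hsum.comp_injective hinj2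
  have hs3 : Summable (fun m : ℕ => ‖ψ (-(nseq m : ℤ))‖ ^ 2) := hsum.comp_injective hinj3
  have hs4 : Summable (fun m : ℕ => ‖ψ (-(nseq m : ℤ) - 1)‖ ^ 2) := hsum.comp_injective hinj4
  have hmaj : Summable (fun m : ℕ => 4 / c ^ 2 *
      (‖ψ ((nseq m : ℤ))‖ ^ 2 + ‖ψ ((nseq m : ℤ) - 1)‖ ^ 2 +
        ‖ψ (-(nseq m : ℤ))‖ ^ 2 + ‖ψ (-(nseq m : ℤ) - 1)‖ ^ 2)) :=
    (((hs1.add hs2).add hs3).add hs4).mul_left _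
  exact hdiv (Summable.of_nonneg_of_le (fun m => by positivity) hbound hmaj)
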